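/- Let Ω ⊆ ℝ^d be a measurable set of finite Lebesgue measure, let J ∈ L¹(ℝ^d) be even (J(−x) = J(x) for a.e. x), and set a(x) := ∫_Ω J(x − y) dy; assume a(x) ≥ 0 for a.e. x ∈ Ω. Let q > 0, c₆ > 0, c₇ ≥ 0, and let F : ℝ → ℝ be continuous with F(s) ≥ c₆|s|^{2+2q} − c₇ for all s ∈ ℝ. Then there exist constants α > 0 and c > 0 such that for every φ ∈ L^{2+2q}(Ω) with F∘φ integrable on Ω, (1/2) ∫_Ω ∫_Ω J(x − y)(φ(x) − φ(y))² dy dx + 2 ∫_Ω F(φ(x)) dx ≥ α ( ‖φ‖²_{L²(Ω)} + ∫_Ω F(φ(x)) dx ) − c. -/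

import Mathlib

open MeasureTheory
open scoped ENNReal

set_option maxHeartbeats 1000000

/-- Pointwise absorption: `A s² ≤ B |s|^(2+2q) + A (A/B)^(1/q)`. -/
lemma aux_pointwise {A B q : ℝ} (hA : 0 < A) (hB : 0 < B) (hq : 0 < q) (s : ℝ) :
    A * s ^ 2 ≤ B * |s| ^ (2 + 2 * q) + A * (A / B) ^ (1 / q) := by
  set t := |s| with ht_def
  have ht : 0 ≤ t := abs_nonneg s
  have hs2 : s ^ 2 = t ^ 2 := (sq_abs s).symm
  rcases le_or_gt ((A / B) ^ (1 / q)) (t ^ 2) with h | h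
  · -- large case
    have htpos : 0 < t := by
      rcases ht.lt_or_eq with h' | h'
      · exact h'
      · exfalso
        have hpos : (0 : ℝ) < (A / B) ^ (1 / q) :=
          Real.rpow_pos_of_pos (div_pos hA hB) _
        rw [← h', show ((0:ℝ) ^ 2) = 0 from by norm_num] at h
        linarith
    have h2q : t ^ (2 * q : ℝ) = (t ^ (2 : ℕ)) ^ (q : ℝ) := by
      rw [← Real.rpow_natCast t 2, ← Real.rpow_mul ht]
      norm_num
    have hAB : A / B ≤ t ^ (2 * q : ℝ) := by
      have h1 : ((A / B) ^ (1 / q)) ^ (q : ℝ) ≤ (t ^ (2 : ℕ)) ^ (q : ℝ) :=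
        Real.rpow_le_rpow (Real.rpow_nonneg (div_pos hA hB).le _) h hq.le
      have h2 : ((A / B) ^ (1 / q)) ^ (q : ℝ) = A / B := by
        rw [← Real.rpow_mul (div_pos hA hB).le]
        rw [one_div_mul_cancel hq.ne', Real.rpow_one]
      rw [h2q]
      linarith [h1, h2]
    have hsplit : t ^ (2 + 2 * q : ℝ) = t ^ (2 : ℕ) * t ^ (2 * q : ℝ) := by
      rw [← Real.rpow_natCast t 2, ← Real.rpow_add htpos]
      norm_num
    have key : A * t ^ 2 ≤ B * t ^ (2 + 2 * q : ℝ) := by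
      rw [hsplit]
      have := mul_le_mul_of_nonneg_left hAB
        (mul_pos hB (by positivity : (0:ℝ) < t ^ (2:ℕ))).le
      calc A * t ^ 2 = B * t ^ (2:ℕ) * (A / B) := by field_simp
        _ ≤ B * t ^ (2:ℕ) * (t ^ (2 * q : ℝ)) := this
        _ = B * (t ^ (2:ℕ) * t ^ (2 * q : ℝ)) := by ring
    have hC : 0 ≤ A * (A / B) ^ (1 / q) :=
      mul_nonneg hA.le (Real.rpow_nonneg (div_pos hA hB).le _)
    rw [hs2]
    linarith
  · -- small case
    have h1 : A * t ^ 2 ≤ A * (A / B) ^ (1 / q) :=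
      mul_le_mul_of_nonneg_left h.le hA.le
    have h2 : 0 ≤ B * t ^ (2 + 2 * q : ℝ) :=
      mul_nonneg hB.le (Real.rpow_nonneg ht _)
    rw [hs2]
    linarith

/-- Lower bound on the double integral term. -/
lemma aux_double (d : ℕ) (Ω : Set (EuclideanSpace ℝ (Fin d)))
    (hΩ : MeasurableSet Ω) (hΩfin : volume Ω ≠ ⊤)
    (J : EuclideanSpace ℝ (Fin d) → ℝ) (hJ : Integrable J volume)
    (φ : EuclideanSpace ℝ (Fin d) → ℝ)
    (hφ2 : MemLp φ 2 (volume.restrict Ω)) :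
    -(4 * (∫ x, |J x|) * ∫ x in Ω, φ x ^ 2) ≤
      ∫ x in Ω, ∫ y in Ω, J (x - y) * (φ x - φ y) ^ 2 := by
  haveI hfin : IsFiniteMeasure ((volume : Measure (EuclideanSpace ℝ (Fin d))).restrict Ω) :=
    ⟨by rw [Measure.restrict_apply_univ]; exact hΩfin.lt_top⟩
  have hφsq : Integrable (fun x => φ x ^ 2) (volume.restrict Ω) := hφ2.integrable_sq
  set M := ∫ x, |J x| with hM
  have hM0 : 0 ≤ M := integral_nonneg fun x => abs_nonneg _
  have hJabs : Integrable (fun x => |J x|) volume := hJ.abs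
  -- bounds on set integrals of translates
  have hbd_right : ∀ y, (∫ x in Ω, |J (x - y)|) ≤ M := by
    intro y
    have h1 : Integrable (fun x => |J (x - y)|) volume := hJabs.comp_sub_right y
    calc (∫ x in Ω, |J (x - y)|) ≤ ∫ x, |J (x - y)| :=
          setIntegral_le_integral h1 (Filter.Eventually.of_forall fun x => abs_nonneg _)
      _ = M := by rw [hM]; exact integral_sub_right_eq_self (fun x => |J x|) y
  have hbd_left : ∀ x, (∫ y in Ω, |J (x - y)|) ≤ M := by
    intro x
    have h1 : Integrable (fun y => |J (x - y)|) volume := hJabs.comp_sub_left x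
    calc (∫ y in Ω, |J (x - y)|) ≤ ∫ y, |J (x - y)| :=
          setIntegral_le_integral h1 (Filter.Eventually.of_forall fun y => abs_nonneg _)
      _ = M := by rw [hM]; exact integral_sub_left_eq_self (fun x => |J x|) volume x
  -- measurability on the product
  have hJm : AEStronglyMeasurable (fun p : _ × _ => J (p.1 - p.2))
      ((volume.restrict Ω).prod (volume.restrict Ω)) := by
    have h0 : AEStronglyMeasurable (fun p : _ × _ => J (p.1 - p.2))
        ((volume : Measure (EuclideanSpace ℝ (Fin d))).prod volume) :=
      hJ.aestronglyMeasurable.comp_quasiMeasurePreserving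
        (quasiMeasurePreserving_sub_of_right_invariant volume volume)
    have heq : (volume.restrict Ω).prod (volume.restrict Ω)
        = ((volume : Measure (EuclideanSpace ℝ (Fin d))).prod volume).restrict (Ω ×ˢ Ω) :=
      Measure.prod_restrict Ω Ω
    rw [heq]
    exact h0.restrict
  have hJma : AEStronglyMeasurable (fun p : _ × _ => |J (p.1 - p.2)|)
      ((volume.restrict Ω).prod (volume.restrict Ω)) := by
    simpa [Real.norm_eq_abs] using hJm.norm
  have hφ1m : AEStronglyMeasurable (fun p : _ × _ => φ p.1)
      ((volume.restrict Ω).prod (volume.restrict Ω)) :=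
    hφ2.aestronglyMeasurable.comp_fst
  have hφ2m : AEStronglyMeasurable (fun p : _ × _ => φ p.2)
      ((volume.restrict Ω).prod (volume.restrict Ω)) :=
    hφ2.aestronglyMeasurable.comp_snd
  -- integrability of the dominating pieces
  have hm1 : AEStronglyMeasurable (fun p : _ × _ => |J (p.1 - p.2)| * φ p.1 ^ 2)
      ((volume.restrict Ω).prod (volume.restrict Ω)) := hJma.mul (hφ1m.pow 2)
  have hm2 : AEStronglyMeasurable (fun p : _ × _ => |J (p.1 - p.2)| * φ p.2 ^ 2)
      ((volume.restrict Ω).prod (volume.restrict Ω)) := hJma.mul (hφ2m.pow 2)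
  have h1int : Integrable (fun p : _ × _ => |J (p.1 - p.2)| * φ p.1 ^ 2)
      ((volume.restrict Ω).prod (volume.restrict Ω)) := by
    rw [integrable_prod_iff hm1]
    constructor
    · refine Filter.Eventually.of_forall fun x => ?_
      show Integrable (fun y => |J (x - y)| * φ x ^ 2) (volume.restrict Ω)
      have : Integrable (fun y => |J (x - y)|) (volume.restrict Ω) :=
        (hJabs.comp_sub_left x).restrict
      exact this.mul_const _
    · refine Integrable.mono' (hφsq.const_mul M) hm1.norm.integral_prod_right' ?_
      refine Filter.Eventually.of_forall fun x => ?_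
      show ‖∫ y in Ω, ‖|J (x - y)| * φ x ^ 2‖‖ ≤ M * φ x ^ 2
      have hnn : 0 ≤ ∫ y in Ω, ‖|J (x - y)| * φ x ^ 2‖ :=
        integral_nonneg fun y => norm_nonneg _
      rw [Real.norm_eq_abs, abs_of_nonneg hnn]
      have heq : (∫ y in Ω, ‖|J (x - y)| * φ x ^ 2‖)
          = (∫ y in Ω, |J (x - y)|) * φ x ^ 2 := by
        rw [← integral_mul_const]
        congr 1 with y
        rw [Real.norm_eq_abs, abs_mul, abs_abs, abs_of_nonneg (sq_nonneg (φ x))]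
      rw [heq]
      exact mul_le_mul_of_nonneg_right (hbd_left x) (sq_nonneg _)
  have h2int : Integrable (fun p : _ × _ => |J (p.1 - p.2)| * φ p.2 ^ 2)
      ((volume.restrict Ω).prod (volume.restrict Ω)) := by
    rw [integrable_prod_iff' hm2]
    constructor
    · refine Filter.Eventually.of_forall fun y => ?_
      show Integrable (fun x => |J (x - y)| * φ y ^ 2) (volume.restrict Ω)
      have : Integrable (fun x => |J (x - y)|) (volume.restrict Ω) :=
        (hJabs.comp_sub_right y).restrict
      exact this.mul_const _
    · refine Integrable.mono' (hφsq.const_mul M) hm2.norm.prod_swap.integral_prod_right' ?_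
      refine Filter.Eventually.of_forall fun y => ?_
      show ‖∫ x in Ω, ‖|J (x - y)| * φ y ^ 2‖‖ ≤ M * φ y ^ 2
      have hnn : 0 ≤ ∫ x in Ω, ‖|J (x - y)| * φ y ^ 2‖ :=
        integral_nonneg fun x => norm_nonneg _
      rw [Real.norm_eq_abs, abs_of_nonneg hnn]
      have heq : (∫ x in Ω, ‖|J (x - y)| * φ y ^ 2‖)
          = (∫ x in Ω, |J (x - y)|) * φ y ^ 2 := by
        rw [← integral_mul_const]
        congr 1 with x
        rw [Real.norm_eq_abs, abs_mul, abs_abs, abs_of_nonneg (sq_nonneg (φ y))]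
      rw [heq]
      exact mul_le_mul_of_nonneg_right (hbd_right y) (sq_nonneg _)
  have hHint : Integrable (fun p : _ × _ =>
      2 * (|J (p.1 - p.2)| * φ p.1 ^ 2) + 2 * (|J (p.1 - p.2)| * φ p.2 ^ 2))
      ((volume.restrict Ω).prod (volume.restrict Ω)) :=
    (h1int.const_mul 2).add (h2int.const_mul 2)
  have hGm : AEStronglyMeasurable (fun p : _ × _ => J (p.1 - p.2) * (φ p.1 - φ p.2) ^ 2)
      ((volume.restrict Ω).prod (volume.restrict Ω)) := hJm.mul ((hφ1m.sub hφ2m).pow 2)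
  have hGH : ∀ p : (EuclideanSpace ℝ (Fin d)) × (EuclideanSpace ℝ (Fin d)),
      ‖J (p.1 - p.2) * (φ p.1 - φ p.2) ^ 2‖ ≤
        2 * (|J (p.1 - p.2)| * φ p.1 ^ 2) + 2 * (|J (p.1 - p.2)| * φ p.2 ^ 2) := by
    intro p
    rw [Real.norm_eq_abs, abs_mul, abs_of_nonneg (sq_nonneg (φ p.1 - φ p.2))]
    nlinarith [mul_nonneg (abs_nonneg (J (p.1 - p.2))) (sq_nonneg (φ p.1 + φ p.2)),
      abs_nonneg (J (p.1 - p.2)), sq_nonneg (φ p.1 - φ p.2)]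
  have hGint : Integrable (fun p : _ × _ => J (p.1 - p.2) * (φ p.1 - φ p.2) ^ 2)
      ((volume.restrict Ω).prod (volume.restrict Ω)) :=
    hHint.mono' hGm (Filter.Eventually.of_forall hGH)
  -- the iterated integral equals the product integral
  have hiter : (∫ x in Ω, ∫ y in Ω, J (x - y) * (φ x - φ y) ^ 2)
      = ∫ p : _ × _, J (p.1 - p.2) * (φ p.1 - φ p.2) ^ 2
          ∂((volume.restrict Ω).prod (volume.restrict Ω)) :=
    (integral_prod _ hGint).symm
  -- lower bound on the product integral
  have hlow : -(∫ p : _ × _,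
        (2 * (|J (p.1 - p.2)| * φ p.1 ^ 2) + 2 * (|J (p.1 - p.2)| * φ p.2 ^ 2))
        ∂((volume.restrict Ω).prod (volume.restrict Ω)))
      ≤ ∫ p : _ × _, J (p.1 - p.2) * (φ p.1 - φ p.2) ^ 2
          ∂((volume.restrict Ω).prod (volume.restrict Ω)) := by
    rw [← integral_neg]
    refine integral_mono hHint.neg hGint fun p => ?_
    have h1 := hGH p
    have h2 := neg_abs_le (J (p.1 - p.2) * (φ p.1 - φ p.2) ^ 2)
    rw [Real.norm_eq_abs] at h1
    simp only [Pi.neg_apply]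
    linarith
  -- bound the H-integral
  have hH1 : (∫ p : _ × _, |J (p.1 - p.2)| * φ p.1 ^ 2
      ∂((volume.restrict Ω).prod (volume.restrict Ω))) ≤ M * ∫ x in Ω, φ x ^ 2 := by
    rw [integral_prod _ h1int]
    have h0 : (∫ x in Ω, M * φ x ^ 2) = M * ∫ x in Ω, φ x ^ 2 := integral_const_mul _ _
    rw [← h0]
    refine integral_mono h1int.integral_prod_left (hφsq.const_mul M) fun x => ?_
    simp only
    have heq : (∫ y in Ω, |J (x - y)| * φ x ^ 2) = (∫ y in Ω, |J (x - y)|) * φ x ^ 2 :=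
      integral_mul_const _ _
    rw [heq]
    exact mul_le_mul_of_nonneg_right (hbd_left x) (sq_nonneg _)
  have hH2 : (∫ p : _ × _, |J (p.1 - p.2)| * φ p.2 ^ 2
      ∂((volume.restrict Ω).prod (volume.restrict Ω))) ≤ M * ∫ x in Ω, φ x ^ 2 := by
    rw [integral_prod_symm _ h2int]
    have h0 : (∫ y in Ω, M * φ y ^ 2) = M * ∫ x in Ω, φ x ^ 2 := integral_const_mul _ _
    rw [← h0]
    refine integral_mono h2int.integral_prod_right (hφsq.const_mul M) fun y => ?_
    simp only
    have heq : (∫ x in Ω, |J (x - y)| * φ y ^ 2) = (∫ x in Ω, |J (x - y)|) * φ y ^ 2 :=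
      integral_mul_const _ _
    rw [heq]
    exact mul_le_mul_of_nonneg_right (hbd_right y) (sq_nonneg _)
  have hHtot : (∫ p : _ × _,
      (2 * (|J (p.1 - p.2)| * φ p.1 ^ 2) + 2 * (|J (p.1 - p.2)| * φ p.2 ^ 2))
      ∂((volume.restrict Ω).prod (volume.restrict Ω))) ≤ 4 * M * ∫ x in Ω, φ x ^ 2 := by
    rw [integral_add (h1int.const_mul 2) (h2int.const_mul 2),
      integral_const_mul, integral_const_mul]
    linarith
  rw [hiter]
  linarith

/-- coercivity of the nonlocal energy (estimate (3.9)). -/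
theorem stmt9 (d : ℕ) (Ω : Set (EuclideanSpace ℝ (Fin d)))
    (hΩ : MeasurableSet Ω) (hΩfin : volume Ω ≠ ⊤)
    (J : EuclideanSpace ℝ (Fin d) → ℝ) (hJ : Integrable J volume)
    (hJeven : ∀ᵐ x : EuclideanSpace ℝ (Fin d) ∂volume, J (-x) = J x)
    (a : EuclideanSpace ℝ (Fin d) → ℝ)
    (ha_def : ∀ x, a x = ∫ y in Ω, J (x - y))
    (ha_nonneg : ∀ᵐ x ∂(volume.restrict Ω), 0 ≤ a x)
    (q c₆ c₇ : ℝ) (hq : 0 < q) (hc₆ : 0 < c₆) (hc₇ : 0 ≤ c₇)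
    (F : ℝ → ℝ) (hFcont : Continuous F)
    (hFcoer : ∀ s : ℝ, c₆ * |s| ^ (2 + 2 * q) - c₇ ≤ F s) :
    ∃ α > (0 : ℝ), ∃ c > (0 : ℝ),
      ∀ φ : EuclideanSpace ℝ (Fin d) → ℝ,
        MemLp φ (ENNReal.ofReal (2 + 2 * q)) (volume.restrict Ω) →
        IntegrableOn (fun x => F (φ x)) Ω →
        α * ((∫ x in Ω, φ x ^ 2) + ∫ x in Ω, F (φ x)) - c ≤
          (1 / 2 : ℝ) * (∫ x in Ω, ∫ y in Ω, J (x - y) * (φ x - φ y) ^ 2) +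
            2 * ∫ x in Ω, F (φ x) := by
  haveI hfin : IsFiniteMeasure ((volume : Measure (EuclideanSpace ℝ (Fin d))).restrict Ω) :=
    ⟨by rw [Measure.restrict_apply_univ]; exact hΩfin.lt_top⟩
  set M := ∫ x, |J x| with hM
  have hM0 : 0 ≤ M := integral_nonneg fun x => abs_nonneg _
  set A := 1 + 2 * M with hA
  have hApos : 0 < A := by rw [hA]; linarith
  set C := A * (A / c₆) ^ (1 / q) with hC
  have hC0 : 0 ≤ C := by
    rw [hC]
    exact mul_nonneg hApos.le (Real.rpow_nonneg (div_pos hApos hc₆).le _)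
  set V := (volume Ω).toReal with hV
  have hV0 : 0 ≤ V := ENNReal.toReal_nonneg
  refine ⟨1, one_pos, c₇ * V + C * V + 1, by positivity, fun φ hφ hFint => ?_⟩
  -- basic integrabilities
  have hexp : (2 : ℝ≥0∞) ≤ ENNReal.ofReal (2 + 2 * q) := by
    rw [show (2 : ℝ≥0∞) = ENNReal.ofReal 2 by simp]
    exact ENNReal.ofReal_le_ofReal (by linarith)
  have hφ2 : MemLp φ 2 (volume.restrict Ω) := hφ.mono_exponent hexp
  have hφsq : Integrable (fun x => φ x ^ 2) (volume.restrict Ω) := hφ2.integrable_sq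
  have hP : Integrable (fun x => |φ x| ^ (2 + 2 * q)) (volume.restrict Ω) := by
    have hne0 : ENNReal.ofReal (2 + 2 * q) ≠ 0 := by
      simp only [ne_eq, ENNReal.ofReal_eq_zero, not_le]
      linarith
    have hnetop : ENNReal.ofReal (2 + 2 * q) ≠ ⊤ := ENNReal.ofReal_ne_top
    have h0 := hφ.integrable_norm_rpow hne0 hnetop
    rw [ENNReal.toReal_ofReal (by linarith)] at h0
    simpa [Real.norm_eq_abs] using h0
  -- absorption inequality
  have habs : A * (∫ x in Ω, φ x ^ 2) ≤ c₆ * (∫ x in Ω, |φ x| ^ (2 + 2 * q)) + C * V := by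
    have hmono : (∫ x in Ω, A * φ x ^ 2)
        ≤ ∫ x in Ω, (c₆ * |φ x| ^ (2 + 2 * q) + C) := by
      refine integral_mono (hφsq.const_mul A) ((hP.const_mul c₆).add (integrable_const C))
        fun x => ?_
      rw [hC]
      exact aux_pointwise hApos hc₆ hq (φ x)
    rw [integral_add (hP.const_mul c₆) (integrable_const C)] at hmono
    rw [integral_const_mul, integral_const_mul] at hmono
    have hconst : (∫ _x in Ω, C ∂(volume : Measure (EuclideanSpace ℝ (Fin d)))) = C * V := by
      rw [setIntegral_const, smul_eq_mul, measureReal_def, ← hV, mul_comm]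
    rw [hconst] at hmono
    exact hmono
  -- F-coercivity integrated
  have hFlow : c₆ * (∫ x in Ω, |φ x| ^ (2 + 2 * q))
      ≤ (∫ x in Ω, F (φ x)) + c₇ * V := by
    have hmono : (∫ x in Ω, c₆ * |φ x| ^ (2 + 2 * q))
        ≤ ∫ x in Ω, (F (φ x) + c₇) :=
      integral_mono (hP.const_mul c₆) (hFint.add (integrable_const c₇))
        (fun x => by linarith [hFcoer (φ x)])
    rw [integral_add hFint (integrable_const c₇)] at hmono
    rw [integral_const_mul] at hmono
    have hconst : (∫ _x in Ω, c₇ ∂(volume : Measure (EuclideanSpace ℝ (Fin d)))) = c₇ * V := by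
      rw [setIntegral_const, smul_eq_mul, measureReal_def, ← hV, mul_comm]
    rw [hconst] at hmono
    exact hmono
  -- double integral lower bound
  have hdouble := aux_double d Ω hΩ hΩfin J hJ φ hφ2
  rw [← hM] at hdouble
  rw [hA] at habs
  linarith
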